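/- In Q[[λ]] one has (qλ−1)·L[F·log_q(1−λ)] = −(2q[1/2]_q λ − 1)·F − 2qλ(q^{1/2}λ − 1)·d_qF, where F := Σ_{n≥0} a_n λ^n; equivalently, since qλ−1 is a unit of Q[[λ]], L[F·log_q(1−λ)] = −((2q[1/2]_q λ − 1)/(qλ−1))·F − 2qλ·((q^{1/2}λ−1)/(qλ−1))·d_qF. -/

import Mathlib

/- Setting (following Dwork-type q-congruences / q-hypergeometric papers):
`p` is an odd prime, `R = ℤ_p[[q−1]]` is implemented as `PowerSeries ℤ_[p]`, the power-series
variable `PowerSeries.X` standing for `q − 1`. -/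

set_option maxHeartbeats 1000000
set_option synthInstance.maxHeartbeats 400000

noncomputable section
open PowerSeries
namespace QDwork

variable (p : ℕ) [Fact p.Prime]

/-- `R = ℤ_p[[q−1]]`. -/
abbrev R : Type := PowerSeries ℤ_[p]

/-- `q = 1 + (q−1) ∈ R`. -/
def qq : R p := 1 + PowerSeries.X

/-- `q^a = Σ_{i≥0} binom(a,i)(q−1)^i ∈ R` for `a ∈ ℤ_p`, using the p-adically interpolated
binomial coefficients `Ring.choose` (`ℤ_p` is a binomial ring). -/
def qpow (a : ℤ_[p]) : R p := PowerSeries.mk fun i => Ring.choose a i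

/-- The q-number `[a]_q = (q^a−1)/(q−1) = Σ_{i≥1} binom(a,i)(q−1)^{i−1} ∈ R` for `a ∈ ℤ_p`. -/
def qnum (a : ℤ_[p]) : R p := PowerSeries.mk fun i => Ring.choose a (i + 1)

/-- The q-number `[n]_q = 1 + q + ⋯ + q^{n−1} ∈ R` of a natural number `n`. -/
def qnat (n : ℕ) : R p := ∑ i ∈ Finset.range n, qq p ^ i

/-- `1/2 ∈ ℤ_p` (recall `p` is odd, so `2` is a unit of `ℤ_p`). -/
def half : ℤ_[p] := Ring.inverse 2

/-- The q-derivative `d_q = (γ−1)/((q−1)λ)` on `A[[λ]]`, for a commutative ring `A` with a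
distinguished element `q`; it is given on coefficients by `d_q(Σ aₙλⁿ) = Σ [n]_q aₙ λ^{n−1}`,
and is characterized by `dq_spec` below. -/
def dq {A : Type} [CommRing A] (q : A) (f : PowerSeries A) : PowerSeries A :=
  PowerSeries.mk fun n => (∑ i ∈ Finset.range (n + 1), q ^ i) * PowerSeries.coeff (n + 1) f

/-- `d_q` is indeed `(γ−1)/((q−1)λ)`, where `γ(f)(λ) = f(qλ)` is `PowerSeries.rescale q`:
we have `(q−1)·λ·(d_q f) = γ(f) − f`. -/
theorem dq_spec {A : Type} [CommRing A] (q : A) (f : PowerSeries A) :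
    PowerSeries.C (q - 1) * PowerSeries.X * dq q f = PowerSeries.rescale q f - f := by
  ext n
  rw [mul_comm (PowerSeries.C (q - 1)) PowerSeries.X, mul_assoc]
  rcases n with _ | n
  · have h0 := PowerSeries.coeff_rescale f q 0
    simp only [pow_zero, one_mul, PowerSeries.coeff_zero_eq_constantCoeff] at h0
    simp only [PowerSeries.coeff_zero_eq_constantCoeff, map_mul, map_sub, constantCoeff_X,
      zero_mul, h0, sub_self]
  · rw [PowerSeries.coeff_succ_X_mul, PowerSeries.coeff_C_mul, dq, PowerSeries.coeff_mk,
      map_sub, PowerSeries.coeff_rescale]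
    rw [← mul_assoc, mul_comm (q - 1), geom_sum_mul, sub_one_mul]

/-- `Q = Frac(R)`. -/
abbrev Q : Type := FractionRing (R p)

/-- The canonical injection `R → Q`. -/
def ι : R p →+* Q p := algebraMap (R p) (Q p)

/-- `q ∈ Q`. -/
def qQ : Q p := ι p (qq p)

/-- `[a]_q` viewed in `Q`, for `a ∈ ℤ_p`. -/
def qnumQ (a : ℤ_[p]) : Q p := ι p (qnum p a)

/-- `[n]_q` viewed in `Q`, for a natural number `n`. -/
def qnatQ (n : ℕ) : Q p := ι p (qnat p n)

/-- `a_n = ∏_{i=0}^{n−1} ([i+1/2]_q/[i+1]_q)² ∈ Q`, with `a_0 = 1`. -/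
def aCoef (n : ℕ) : Q p :=
  ∏ i ∈ Finset.range n, (qnumQ p ((i : ℤ_[p]) + half p) / qnumQ p ((i : ℤ_[p]) + 1)) ^ 2

/-- `F = Σ_{n≥0} a_n λ^n ∈ Q[[λ]]`. -/
def Fq : PowerSeries (Q p) := PowerSeries.mk fun n => aCoef p n

/-- `α = 1 + [2]_q − 2[1/2]_q ∈ Q`. -/
def alphaQ : Q p := 1 + qnumQ p 2 - 2 * qnumQ p (half p)

/-- The q-hypergeometric operator
`L[f] = qλ(1−qλ)·d_q²f + (1−αλ)·d_qf − [1/2]_q²·f` on `Q[[λ]]`. -/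
def Lq (f : PowerSeries (Q p)) : PowerSeries (Q p) :=
  PowerSeries.C (qQ p) * PowerSeries.X *
      (1 - PowerSeries.C (qQ p) * PowerSeries.X) * dq (qQ p) (dq (qQ p) f) +
    (1 - PowerSeries.C (alphaQ p) * PowerSeries.X) * dq (qQ p) f -
    PowerSeries.C (qnumQ p (half p) ^ 2) * f

/-- `log_q(1−λ) = −Σ_{n≥1} λ^n/[n]_q ∈ Q[[λ]]`. -/
def logq1subl : PowerSeries (Q p) :=
  PowerSeries.mk fun n => if n = 0 then 0 else -(qnatQ p n)⁻¹


/-! ### Auxiliary lemmas -/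

lemma aux_C_ne {a : Q p} (h : a ≠ 0) : PowerSeries.C a ≠ 0 := by
  intro h0
  apply h
  have := congrArg (PowerSeries.constantCoeff) h0
  simpa using this

lemma aux_one_sub_X_ne : (1 - PowerSeries.X : PowerSeries (Q p)) ≠ 0 := by
  intro h0
  have := congrArg (PowerSeries.constantCoeff) h0
  simp [constantCoeff_X] at this

lemma aux_iota_inj : Function.Injective (ι p) :=
  IsFractionRing.injective (R p) (Q p)

lemma aux_iota_ne {x : R p} (h : x ≠ 0) : ι p x ≠ 0 := by
  intro h0
  exact h (aux_iota_inj p (by rw [h0, map_zero]))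

lemma aux_iX : ι p PowerSeries.X = qQ p - 1 := by
  rw [qQ, qq, map_add, map_one]; ring

lemma aux_hq1 : qQ p - 1 ≠ 0 := by
  rw [← aux_iX]
  exact aux_iota_ne p PowerSeries.X_ne_zero

lemma aux_hq0 : qQ p ≠ 0 := by
  apply aux_iota_ne
  intro h0
  have := congrArg (PowerSeries.constantCoeff) h0
  simp [qq, constantCoeff_X] at this

lemma aux_qnatQ_eq (n : ℕ) : qnatQ p n = ∑ i ∈ Finset.range n, (qQ p) ^ i := by
  rw [qnatQ, qnat, map_sum]
  simp only [map_pow]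
  rfl

lemma aux_qnat_ne (n : ℕ) (h : 1 ≤ n) : qnatQ p n ≠ 0 := by
  apply aux_iota_ne
  intro h0
  have h1 := congrArg (PowerSeries.constantCoeff) h0
  rw [qnat, map_sum, map_zero] at h1
  have h2 : ∀ i ∈ Finset.range n, PowerSeries.constantCoeff ((qq p) ^ i) = 1 := by
    intro i _
    rw [map_pow]
    simp [qq, constantCoeff_X]
  rw [Finset.sum_congr rfl h2, Finset.sum_const, Finset.card_range, nsmul_eq_mul, mul_one] at h1
  exact (Nat.cast_ne_zero (R := ℤ_[p])).mpr (by omega) h1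

lemma aux_geom (n : ℕ) : (qQ p - 1) * qnatQ p n = (qQ p) ^ n - 1 := by
  rw [aux_qnatQ_eq, mul_comm]
  exact geom_sum_mul (qQ p) n

lemma aux_pow_ne (n : ℕ) (h : 1 ≤ n) : (qQ p) ^ n - 1 ≠ 0 := by
  rw [← aux_geom]
  exact mul_ne_zero (aux_hq1 p) (aux_qnat_ne p n h)

lemma aux_X_mul_qnum (a : ℤ_[p]) :
    (PowerSeries.X : R p) * qnum p a = qpow p a - 1 := by
  ext n
  rcases n with _ | n
  · simp [qpow, PowerSeries.coeff_mk, Ring.choose_zero_right, constantCoeff_X]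
  · rw [PowerSeries.coeff_succ_X_mul, qnum, PowerSeries.coeff_mk, map_sub, qpow,
      PowerSeries.coeff_mk, PowerSeries.coeff_one, if_neg (Nat.succ_ne_zero n), sub_zero]

lemma aux_kq_num (a : ℤ_[p]) :
    (qQ p - 1) * qnumQ p a = ι p (qpow p a) - 1 := by
  have h := congrArg (ι p) (aux_X_mul_qnum p a)
  rw [map_mul, map_sub, map_one, aux_iX] at h
  exact h

lemma aux_qpow_add (a b : ℤ_[p]) : qpow p (a + b) = qpow p a * qpow p b := by
  ext n
  rw [qpow, PowerSeries.coeff_mk, PowerSeries.coeff_mul,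
    Ring.add_choose_eq n (Commute.all a b)]
  apply Finset.sum_congr rfl
  intro x _
  rw [qpow, qpow, PowerSeries.coeff_mk, PowerSeries.coeff_mk]

lemma aux_qpow_one : qpow p 1 = qq p := by
  ext n
  rw [qpow, PowerSeries.coeff_mk, qq, map_add, ← Nat.cast_one, Ring.choose_natCast,
    PowerSeries.coeff_one, PowerSeries.coeff_X]
  rcases n with _ | _ | n <;> norm_num [Nat.choose]

lemma aux_qpow_natCast (n : ℕ) : qpow p (n : ℤ_[p]) = qq p ^ n := by
  induction n with
  | zero =>
    ext i
    rw [qpow, PowerSeries.coeff_mk, Nat.cast_zero, ← Nat.cast_zero (R := ℤ_[p]),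
      Ring.choose_natCast, pow_zero, PowerSeries.coeff_one]
    rcases i with _ | i <;> norm_num [Nat.choose]
  | succ n ih =>
    rw [Nat.cast_succ, aux_qpow_add, ih, aux_qpow_one, pow_succ]

lemma aux_two_unit (hp : p ≠ 2) : IsUnit (2 : ℤ_[p]) := by
  rw [PadicInt.isUnit_iff]
  have hle : ‖(2 : ℤ_[p])‖ ≤ 1 := PadicInt.norm_le_one _
  have hnd : ¬ ((p : ℤ) ∣ 2) := by
    intro h
    have h2 : p ∣ 2 := by exact_mod_cast h
    have := (Nat.prime_dvd_prime_iff_eq (Fact.out : p.Prime) Nat.prime_two).mp h2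
    exact hp this
  have h2 : ((2 : ℤ) : ℤ_[p]) = (2 : ℤ_[p]) := by norm_num
  have := (PadicInt.norm_int_lt_one_iff_dvd (2 : ℤ)).not.mpr hnd
  rw [h2] at this
  exact le_antisymm hle (not_lt.mp this)

lemma aux_half_add (hp : p ≠ 2) : half p + half p = 1 := by
  have h := Ring.mul_inverse_cancel (2 : ℤ_[p]) (aux_two_unit p hp)
  have : (2 : ℤ_[p]) * half p = 1 := h
  linear_combination this

lemma aux_hss (hp : p ≠ 2) :
    ι p (qpow p (half p)) * ι p (qpow p (half p)) = qQ p := by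
  rw [← map_mul, ← aux_qpow_add, aux_half_add p hp, aux_qpow_one]
  rfl

lemma aux_alpha : alphaQ p = 2 + qQ p - 2 * qnumQ p (half p) := by
  have h2 : qnumQ p 2 = 1 + qQ p := by
    apply mul_left_cancel₀ (aux_hq1 p)
    have h := aux_kq_num p 2
    have hq2 : qpow p (2 : ℤ_[p]) = qq p ^ 2 := by
      have := aux_qpow_natCast p 2
      norm_num at this
      exact this
    rw [hq2, map_pow] at h
    have : ι p (qq p) = qQ p := rfl
    rw [this] at h
    rw [h]; ring
  rw [alphaQ, h2]; ring

lemma aux_rec (n : ℕ) :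
    aCoef p (n + 1) * ((qQ p) ^ (n + 1) - 1) ^ 2 =
      aCoef p n * ((qQ p) ^ n * ι p (qpow p (half p)) - 1) ^ 2 := by
  have hiq : ι p (qq p) = qQ p := rfl
  have hN1 : (qQ p - 1) * qnumQ p ((n : ℤ_[p]) + 1) = (qQ p) ^ (n + 1) - 1 := by
    have h := aux_kq_num p (((n + 1 : ℕ) : ℤ_[p]))
    rw [aux_qpow_natCast, map_pow, hiq] at h
    push_cast at h
    exact h
  have hN2 : (qQ p - 1) * qnumQ p ((n : ℤ_[p]) + half p) =
      (qQ p) ^ n * ι p (qpow p (half p)) - 1 := by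
    have h := aux_kq_num p ((n : ℤ_[p]) + half p)
    rw [aux_qpow_add, map_mul, aux_qpow_natCast, map_pow, hiq] at h
    exact h
  have hN1ne : qnumQ p ((n : ℤ_[p]) + 1) ≠ 0 := by
    intro h0
    rw [h0, mul_zero] at hN1
    exact aux_pow_ne p (n + 1) (by omega) hN1.symm
  have hstep : aCoef p (n + 1) =
      aCoef p n * (qnumQ p ((n : ℤ_[p]) + half p) / qnumQ p ((n : ℤ_[p]) + 1)) ^ 2 := by
    rw [aCoef, Finset.prod_range_succ, ← aCoef]
  rw [hstep, ← hN1, ← hN2]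
  field_simp

/-! ### Coefficient extraction -/

lemma aux_coeff_term (a : Q p) (k d : ℕ) (f : PowerSeries (Q p)) :
    PowerSeries.coeff d (PowerSeries.C a * (PowerSeries.X ^ k * f)) =
      if k ≤ d then a * PowerSeries.coeff (d - k) f else 0 := by
  rw [PowerSeries.coeff_C_mul, PowerSeries.coeff_X_pow_mul', mul_ite, mul_zero]

lemma aux_coeff_add (N : ℕ) (f g : PowerSeries (Q p)) :
    PowerSeries.coeff N (f + g) =
      PowerSeries.coeff N f + PowerSeries.coeff N g :=
  map_add _ _ _

lemma aux_rescale_C (a b : Q p) :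
    PowerSeries.rescale a (PowerSeries.C b) = PowerSeries.C b := by
  ext n
  rcases n with _ | n <;>
    simp [PowerSeries.coeff_rescale, PowerSeries.coeff_C]

lemma aux_rescale_X (a : Q p) :
    PowerSeries.rescale a PowerSeries.X = PowerSeries.C a * PowerSeries.X := by
  ext n
  rw [PowerSeries.coeff_rescale, PowerSeries.coeff_C_mul, PowerSeries.coeff_X]
  rcases n with _ | _ | n <;> simp

lemma aux_hF (hp : p ≠ 2) :
    PowerSeries.C (qQ p) *
        (PowerSeries.X ^ 1 * PowerSeries.rescale (qQ p) (PowerSeries.rescale (qQ p) (Fq p)))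
      + PowerSeries.C (-(qQ p ^ 2)) *
        (PowerSeries.X ^ 2 * PowerSeries.rescale (qQ p) (PowerSeries.rescale (qQ p) (Fq p)))
      + PowerSeries.C (-(2 * qQ p)) *
        (PowerSeries.X ^ 1 * PowerSeries.rescale (qQ p) (Fq p))
      + PowerSeries.C
          (qQ p ^ 2 * (1 + qQ p) - qQ p * (qQ p - 1) * alphaQ p) *
        (PowerSeries.X ^ 2 * PowerSeries.rescale (qQ p) (Fq p))
      + PowerSeries.C (qQ p ^ 2 - qQ p * (qQ p - 1)) * (PowerSeries.X ^ 1 * Fq p)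
      + PowerSeries.C
          (-(qQ p ^ 3) + qQ p * (qQ p - 1) * alphaQ p
            - qQ p * (qQ p - 1) ^ 2 * qnumQ p (half p) ^ 2) *
        (PowerSeries.X ^ 2 * Fq p) = 0 := by
  ext N
  simp only [aux_coeff_add, map_zero, aux_coeff_term]
  rcases N with _ | _ | n
  · simp
  · simp [PowerSeries.coeff_rescale, Fq, PowerSeries.coeff_mk]
    ring
  · have h1 : (1 : ℕ) ≤ n + 1 + 1 := by omega
    have h2 : (2 : ℕ) ≤ n + 1 + 1 := by omega
    have h3 : n + 1 + 1 - 1 = n + 1 := by omega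
    have h4 : n + 1 + 1 - 2 = n := by omega
    simp only [h1, h2, if_true, h3, h4, PowerSeries.coeff_rescale, Fq, PowerSeries.coeff_mk]
    have hrec := aux_rec p n
    have hw := aux_kq_num p (half p)
    have hal := aux_alpha p
    have hss := aux_hss p hp
    linear_combination (qQ p) * hrec
      + ((-(qQ p) + qQ p * (qQ p)^n + (qQ p)^2 - (qQ p)^2 * (qQ p)^n) * aCoef p n) * hal
      + ((-(qQ p) + qQ p * qnumQ p (half p) + 2 * qQ p * (qQ p)^n
          - qQ p * ι p (qpow p (half p)) - (qQ p)^2 * qnumQ p (half p)) * aCoef p n) * hw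
      + ((-(qQ p) + qQ p * ((qQ p)^n)^2) * aCoef p n) * hss

lemma aux_hT (hp : p ≠ 2) :
    PowerSeries.C (qQ p ^ 2 + qQ p) *
        (PowerSeries.X ^ 1 * PowerSeries.rescale (qQ p) (PowerSeries.rescale (qQ p) (Fq p)))
      + PowerSeries.C (-(3 * qQ p ^ 2 + qQ p ^ 3)) *
        (PowerSeries.X ^ 2 * PowerSeries.rescale (qQ p) (PowerSeries.rescale (qQ p) (Fq p)))
      + PowerSeries.C (2 * qQ p ^ 3) *
        (PowerSeries.X ^ 3 * PowerSeries.rescale (qQ p) (PowerSeries.rescale (qQ p) (Fq p)))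
      + PowerSeries.C (-(2 * qQ p + 2 * qQ p ^ 2)) *
        (PowerSeries.X ^ 1 * PowerSeries.rescale (qQ p) (Fq p))
      + PowerSeries.C
          (2 * qQ p ^ 2 * (1 + qQ p) - qQ p * (qQ p - 1) * alphaQ p - qQ p ^ 2 * (qQ p - 1)
            + 2 * qQ p ^ 2 * ι p (qpow p (half p)) + 2 * qQ p ^ 2) *
        (PowerSeries.X ^ 2 * PowerSeries.rescale (qQ p) (Fq p))
      + PowerSeries.C
          (-((1 + qQ p) * qQ p ^ 3) + qQ p ^ 2 * (qQ p - 1) * alphaQ p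
            - 2 * qQ p ^ 2 * ι p (qpow p (half p))) *
        (PowerSeries.X ^ 3 * PowerSeries.rescale (qQ p) (Fq p))
      + PowerSeries.C (qQ p ^ 2 + qQ p) * (PowerSeries.X ^ 1 * Fq p)
      + PowerSeries.C
          (2 * qQ p ^ 2 * (qQ p - 1) * qnumQ p (half p) + qQ p * (qQ p - 1)
            - 2 * qQ p ^ 2 * ι p (qpow p (half p)) - 2 * qQ p ^ 2) *
        (PowerSeries.X ^ 2 * Fq p)
      + PowerSeries.C
          (-(2 * qQ p ^ 2 * (qQ p - 1) * qnumQ p (half p))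
            + 2 * qQ p ^ 2 * ι p (qpow p (half p))) *
        (PowerSeries.X ^ 3 * Fq p) = 0 := by
  ext N
  simp only [aux_coeff_add, map_zero, aux_coeff_term]
  rcases N with _ | _ | _ | n
  · simp
  · simp [PowerSeries.coeff_rescale, Fq, PowerSeries.coeff_mk]
    ring
  · simp [PowerSeries.coeff_rescale, Fq, PowerSeries.coeff_mk]
    have hrec := aux_rec p 0
    have hw := aux_kq_num p (half p)
    have hal := aux_alpha p
    have hss := aux_hss p hp
    norm_num at hrec
    linear_combination (qQ p + (qQ p)^2) * hrec
      + ((qQ p - (qQ p)^2) * aCoef p 0) * hal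
      + ((2 * qQ p + 2 * (qQ p)^2) * aCoef p 0) * hw
      + ((qQ p + (qQ p)^2) * aCoef p 0) * hss
  · have h1 : (1 : ℕ) ≤ n + 1 + 1 + 1 := by omega
    have h2 : (2 : ℕ) ≤ n + 1 + 1 + 1 := by omega
    have h3 : (3 : ℕ) ≤ n + 1 + 1 + 1 := by omega
    have e1 : n + 1 + 1 + 1 - 1 = n + 2 := by omega
    have e2 : n + 1 + 1 + 1 - 2 = n + 1 := by omega
    have e3 : n + 1 + 1 + 1 - 3 = n := by omega
    simp only [h1, h2, h3, if_true, e1, e2, e3, PowerSeries.coeff_rescale, Fq,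
      PowerSeries.coeff_mk]
    have rec1 := aux_rec p (n + 1)
    have rec2 := aux_rec p n
    have hw := aux_kq_num p (half p)
    have hal := aux_alpha p
    have hss := aux_hss p hp
    linear_combination (qQ p + (qQ p)^2) * rec1 + (-(2 * (qQ p)^2)) * rec2
      + (((qQ p)^3 * (qQ p)^n - (qQ p)^2 * (qQ p)^n) * aCoef p n
          + ((qQ p)^2 * (qQ p)^n - (qQ p)^3 * (qQ p)^n) * aCoef p (n + 1)) * hal
      + ((-(2 * (qQ p)^2) - 2 * (qQ p)^2 * (qQ p)^n) * aCoef p n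
          + (2 * (qQ p)^2 + 2 * (qQ p)^2 * (qQ p)^n) * aCoef p (n + 1)) * hw
      + ((-(2 * (qQ p)^2) * ((qQ p)^n)^2) * aCoef p n
          + (((qQ p)^3 + (qQ p)^4) * ((qQ p)^n)^2) * aCoef p (n + 1)) * hss

lemma aux_e4 :
    (1 - PowerSeries.X) *
        (PowerSeries.rescale (qQ p) (logq1subl p) - logq1subl p) =
      -((PowerSeries.C (qQ p) - 1) * PowerSeries.X) := by
  have key : ∀ m : ℕ, PowerSeries.coeff m
      (PowerSeries.rescale (qQ p) (logq1subl p) - logq1subl p) =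
      if m = 0 then 0 else -(qQ p - 1) := by
    intro m
    rcases m with _ | m
    · rw [if_pos rfl, map_sub, PowerSeries.coeff_rescale, logq1subl, PowerSeries.coeff_mk]
      simp
    · rw [map_sub, PowerSeries.coeff_rescale, logq1subl, PowerSeries.coeff_mk,
        if_neg (Nat.succ_ne_zero m), if_neg (Nat.succ_ne_zero m)]
      have hne := aux_qnat_ne p (m + 1) (by omega)
      have hg := aux_geom p (m + 1)
      have hinv : qnatQ p (m + 1) * (qnatQ p (m + 1))⁻¹ = 1 := mul_inv_cancel₀ hne
      linear_combination ((qnatQ p (m + 1))⁻¹) * hg - (qQ p - 1) * hinv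
  ext N
  rcases N with _ | N
  · have hXg : ∀ g : PowerSeries (Q p),
        PowerSeries.coeff 0 (PowerSeries.X * g) = 0 := by
      intro g
      rw [PowerSeries.coeff_zero_eq_constantCoeff, map_mul]
      simp [constantCoeff_X]
    have h0 : PowerSeries.coeff 0 (logq1subl p) = 0 := by
      rw [logq1subl, PowerSeries.coeff_mk]; simp
    have h1 : PowerSeries.coeff 0 (PowerSeries.rescale (qQ p) (logq1subl p)) = 0 := by
      rw [PowerSeries.coeff_rescale, h0, mul_zero]
    have h2 : PowerSeries.coeff 0 ((PowerSeries.C (qQ p) - 1) * PowerSeries.X) = 0 := by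
      rw [PowerSeries.coeff_zero_eq_constantCoeff, map_mul]
      simp [constantCoeff_X]
    simp only [sub_mul, one_mul, map_sub, map_neg, h0, h1, hXg, h2, sub_zero, sub_self, neg_zero]
    simp [PowerSeries.coeff_zero_eq_constantCoeff, constantCoeff_X]
  · rw [sub_mul, one_mul, map_sub, PowerSeries.coeff_succ_X_mul, key, key]
    rcases N with _ | N
    · simp [PowerSeries.coeff_X, PowerSeries.coeff_C_mul, sub_mul]
    · simp [PowerSeries.coeff_X, PowerSeries.coeff_C_mul, sub_mul]

lemma aux_e5 :
    (1 - PowerSeries.C (qQ p) * PowerSeries.X) *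
        (PowerSeries.rescale (qQ p) (PowerSeries.rescale (qQ p) (logq1subl p)) -
          PowerSeries.rescale (qQ p) (logq1subl p)) =
      -((PowerSeries.C (qQ p) - 1) * (PowerSeries.C (qQ p) * PowerSeries.X)) := by
  have h := congrArg (PowerSeries.rescale (qQ p)) (aux_e4 p)
  rw [map_mul, map_sub, map_sub, map_one, map_neg, map_mul, map_sub, map_one,
    aux_rescale_X, aux_rescale_C] at h
  exact h

/-- In `Q[[λ]]`: `(qλ−1)·L[F·log_q(1−λ)] = −(2q[1/2]_q λ − 1)·F − 2qλ(q^{1/2}λ − 1)·d_qF`. -/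
theorem L_F_logq (hp : p ≠ 2) :
    (PowerSeries.C (qQ p) * PowerSeries.X - 1) * Lq p (Fq p * logq1subl p) =
      -((PowerSeries.C (2 * qQ p * qnumQ p (half p)) * PowerSeries.X - 1) * Fq p) -
        PowerSeries.C (2 * qQ p) * PowerSeries.X *
          ((PowerSeries.C (ι p (qpow p (half p))) * PowerSeries.X - 1) *
            dq (qQ p) (Fq p)) := by
  have hq1 := aux_hq1 p
  have hq0 := aux_hq0 p
  have hCk : PowerSeries.C (qQ p - 1) = PowerSeries.C (qQ p) - 1 := by
    rw [map_sub, map_one]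
  have e1 := dq_spec (qQ p) (Fq p * logq1subl p)
  rw [map_mul] at e1
  have e2a := dq_spec (qQ p) (dq (qQ p) (Fq p * logq1subl p))
  have e3 := dq_spec (qQ p) (Fq p)
  have e2b := congrArg (PowerSeries.rescale (qQ p)) e1
  simp only [map_mul, map_sub, map_one] at e2b
  rw [aux_rescale_C, aux_rescale_X] at e2b
  have e4 := aux_e4 p
  have e5 := aux_e5 p
  have hFs := aux_hF p hp
  have hTs := aux_hT p hp
  rw [hCk] at e1 e2a e3
  simp only [map_mul, map_pow, map_add, map_sub, map_neg, map_one, map_ofNat] at hFs hTs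
  have hM : PowerSeries.C (qQ p) *
      ((PowerSeries.C (qQ p) - 1) * PowerSeries.X) ^ 2 * (1 - PowerSeries.X) ≠ 0 := by
    refine mul_ne_zero (mul_ne_zero (aux_C_ne p hq0) (pow_ne_zero 2 (mul_ne_zero ?_
      PowerSeries.X_ne_zero))) (aux_one_sub_X_ne p)
    rw [← hCk]
    exact aux_C_ne p hq1
  apply mul_left_cancel₀ hM
  simp only [Lq, map_mul, map_pow, map_ofNat]
  set Cq := PowerSeries.C (qQ p) with hCq
  set CA := PowerSeries.C (alphaQ p) with hCA
  set CW := PowerSeries.C (qnumQ p (half p)) with hCW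
  set CS := PowerSeries.C (ι p (qpow p (half p))) with hCS
  set F0 := Fq p with hF0
  set L0 := logq1subl p with hL0
  set F1 := PowerSeries.rescale (qQ p) F0 with hF1
  set F2 := PowerSeries.rescale (qQ p) F1 with hF2
  set L1 := PowerSeries.rescale (qQ p) L0 with hL1
  set L2 := PowerSeries.rescale (qQ p) L1 with hL2
  set D1 := dq (qQ p) (F0 * L0) with hD1
  set D2 := dq (qQ p) D1 with hD2
  set DF := dq (qQ p) F0 with hDF
  have e2 : Cq * ((Cq - 1) * PowerSeries.X) ^ 2 * D2 =
      F2 * L2 - (1 + Cq) * (F1 * L1) + Cq * (F0 * L0) := by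
    linear_combination (Cq * ((Cq - 1) * PowerSeries.X)) * e2a + e2b - Cq * e1
  linear_combination
      ((1 - PowerSeries.X) * (Cq * PowerSeries.X - 1) * Cq * PowerSeries.X *
        (1 - Cq * PowerSeries.X)) * e2
    + (Cq * ((Cq - 1) * PowerSeries.X) * (1 - PowerSeries.X) * (Cq * PowerSeries.X - 1) *
        (1 - CA * PowerSeries.X)) * e1
    + ((1 - PowerSeries.X) * (Cq * PowerSeries.X - 1) * L0) * hFs
    + ((1 - PowerSeries.X) * (Cq * PowerSeries.X - 1) * Cq * PowerSeries.X * F2) * e5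
    + ((Cq * PowerSeries.X - 1) *
        (Cq * PowerSeries.X * (1 - Cq * PowerSeries.X) * F2
          - (1 + Cq) * (Cq * PowerSeries.X) * (1 - Cq * PowerSeries.X) * F1
          + Cq * ((Cq - 1) * PowerSeries.X) * (1 - CA * PowerSeries.X) * F1)) * e4
    + ((Cq - 1) * PowerSeries.X) * hTs
    + ((1 - PowerSeries.X) * 2 * Cq ^ 2 * ((Cq - 1) * PowerSeries.X) * PowerSeries.X *
        (CS * PowerSeries.X - 1)) * e3

end QDwork
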